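/- Suppose c₀ = c₁ = 0, so that b₁ = β₁ + ε₁ − ε₀ and b₀ = β₀ + ε₀. If ε₀ and ε₁ are i.i.d. square-integrable real random variables with mean zero, then for every β₀, β₁ ∈ ℝ, every x ∈ {0,1} and every r ∈ {0,1}: E[(b₀ + b₁·x − β₀ − β₁·x)²] ≤ E[(b₀ + b₁·r − β₀ − β₁·x)²]. That is, the unpenalized (zero-penalty) estimator is incentive-compatible. -/

import Mathlib

open MeasureTheory ProbabilityTheory

lemma shift_sq_integral {Ω : Type*} [MeasurableSpace Ω] (μ : Measure Ω)
    [IsProbabilityMeasure μ] (ε : Ω → ℝ) (hL2 : MemLp ε 2 μ)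
    (hmean : ∫ ω, ε ω ∂μ = 0) (c : ℝ) :
    ∫ ω, (c + ε ω) ^ 2 ∂μ = c ^ 2 + ∫ ω, (ε ω) ^ 2 ∂μ := by
  have hint : Integrable ε μ := hL2.integrable one_le_two
  have hsq : Integrable (fun ω => (ε ω) ^ 2) μ := by
    simpa [sq] using hL2.integrable_sq
  have h1 : (fun ω => (c + ε ω) ^ 2)
      = fun ω => c ^ 2 + ((2 * c) * ε ω + (ε ω) ^ 2) := by
    funext ω; ring
  have hlin : Integrable (fun ω => (2 * c) * ε ω + (ε ω) ^ 2) μ :=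
    (hint.const_mul _).add hsq
  have hcm : Integrable (fun ω => (2 * c) * ε ω) μ := hint.const_mul _
  rw [h1, integral_add (integrable_const _) hlin,
    integral_add hcm hsq, MeasureTheory.integral_const_mul, hmean]
  simp

/-- With zero penalties (`c₀ = c₁ = 0`), so that `b₀ = β₀ + ε₀`
and `b₁ = β₁ + ε₁ − ε₀`, and `ε₀, ε₁` i.i.d. square-integrable with mean zero,
the unpenalized estimator is incentive-compatible: for every `β₀, β₁` and
every `x, r ∈ {0,1}`,
`E[(b₀ + b₁·x − β₀ − β₁·x)²] ≤ E[(b₀ + b₁·r − β₀ − β₁·x)²]`. -/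
theorem stmt3 {Ω : Type*} [MeasurableSpace Ω] (μ : Measure Ω)
    [IsProbabilityMeasure μ] (ε₀ ε₁ : Ω → ℝ)
    (hmeas₀ : Measurable ε₀) (hmeas₁ : Measurable ε₁)
    (hindep : IndepFun ε₀ ε₁ μ) (hid : IdentDistrib ε₀ ε₁ μ μ)
    (hL2₀ : MemLp ε₀ 2 μ) (hL2₁ : MemLp ε₁ 2 μ)
    (hmean₀ : ∫ ω, ε₀ ω ∂μ = 0) (hmean₁ : ∫ ω, ε₁ ω ∂μ = 0)
    (β₀ β₁ x r : ℝ) (hx : x = 0 ∨ x = 1) (hr : r = 0 ∨ r = 1) :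
    ∫ ω, ((β₀ + ε₀ ω) + (β₁ + ε₁ ω - ε₀ ω) * x - β₀ - β₁ * x) ^ 2 ∂μ ≤
      ∫ ω, ((β₀ + ε₀ ω) + (β₁ + ε₁ ω - ε₀ ω) * r - β₀ - β₁ * x) ^ 2 ∂μ := by
  have hsqeq : ∫ ω, (ε₀ ω) ^ 2 ∂μ = ∫ ω, (ε₁ ω) ^ 2 ∂μ :=
    (hid.comp (measurable_id.pow_const 2)).integral_eq
  rcases hx with rfl | rfl <;> rcases hr with rfl | rfl
  · exact le_refl _
  · have hL : (fun ω => ((β₀ + ε₀ ω) + (β₁ + ε₁ ω - ε₀ ω) * (0:ℝ) - β₀ - β₁ * 0) ^ 2)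
        = fun ω => ((0:ℝ) + ε₀ ω) ^ 2 := by funext ω; ring
    have hR : (fun ω => ((β₀ + ε₀ ω) + (β₁ + ε₁ ω - ε₀ ω) * (1:ℝ) - β₀ - β₁ * 0) ^ 2)
        = fun ω => (β₁ + ε₁ ω) ^ 2 := by funext ω; ring
    rw [hL, hR, shift_sq_integral μ ε₀ hL2₀ hmean₀, shift_sq_integral μ ε₁ hL2₁ hmean₁,
      hsqeq]
    nlinarith [sq_nonneg β₁]
  · have hL : (fun ω => ((β₀ + ε₀ ω) + (β₁ + ε₁ ω - ε₀ ω) * (1:ℝ) - β₀ - β₁ * 1) ^ 2)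
        = fun ω => ((0:ℝ) + ε₁ ω) ^ 2 := by funext ω; ring
    have hR : (fun ω => ((β₀ + ε₀ ω) + (β₁ + ε₁ ω - ε₀ ω) * (0:ℝ) - β₀ - β₁ * 1) ^ 2)
        = fun ω => ((-β₁) + ε₀ ω) ^ 2 := by funext ω; ring
    rw [hL, hR, shift_sq_integral μ ε₀ hL2₀ hmean₀, shift_sq_integral μ ε₁ hL2₁ hmean₁,
      hsqeq]
    nlinarith [sq_nonneg β₁]
  · exact le_refl _
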